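/- Let c = (c_λ)_{λ⊢4} ∈ ℝ^5 be a coefficient vector. The quartic form f^{(n)} = Σ_{λ⊢4} c_λ p_λ^{(n)} is a sum of squares of polynomials for every n ≥ 4 if and only if there exist real numbers α_{11}, α_{12}, α_{22}, β_{11}, β_{12}, β_{22} with the 2×2 matrices [[α_{11}, α_{12}],[α_{12}, α_{22}]] and [[β_{11}, β_{12}],[β_{12}, β_{22}]] positive semidefinite, such that for all n ≥ 4: f^{(n)} = α_{11} p_{(1,1,1,1)}^{(n)} + 2α_{12} p_{(2,1,1)}^{(n)} + α_{22} p_{(2,2)}^{(n)} + β_{11}(p_{(2,1,1)}^{(n)} − p_{(1,1,1,1)}^{(n)}) + 2β_{12}(p_{(3,1)}^{(n)} − p_{(2,1,1)}^{(n)}) + β_{22}(p_{(4)}^{(n)} − p_{(2,2)}^{(n)}). -/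

import Mathlib

open MvPolynomial

/-- The i-th normalized power sum `p_i^{(n)} = (1/n)(x_1^i + ⋯ + x_n^i)`. -/
noncomputable def psum (n i : ℕ) : MvPolynomial (Fin n) ℝ :=
  C ((n : ℝ)⁻¹) * ∑ j : Fin n, X j ^ i

/-- The symmetric quartic form `f^{(n)} = c4 p_{(4)} + c31 p_{(3,1)} + c22 p_{(2,2)}
+ c211 p_{(2,1,1)} + c1111 p_{(1,1,1,1)}` determined by a coefficient vector in `ℝ^5`. -/
noncomputable def quarticForm (n : ℕ) (c4 c31 c22 c211 c1111 : ℝ) :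
    MvPolynomial (Fin n) ℝ :=
  C c4 * psum n 4 + C c31 * (psum n 3 * psum n 1) + C c22 * psum n 2 ^ 2
    + C c211 * (psum n 2 * psum n 1 ^ 2) + C c1111 * psum n 1 ^ 4


lemma quad_eval (a b d : ℝ) (x : Fin 2 → ℝ) :
    dotProduct (star x) (Matrix.mulVec !![a, b; b, d] x)
      = a * (x 0)^2 + 2 * b * (x 0 * x 1) + d * (x 1)^2 := by
  simp [dotProduct, Matrix.mulVec, Fin.sum_univ_two]
  ring

/-- 2×2 PSD criterion. -/
lemma psd2_iff (a b d : ℝ) :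
    Matrix.PosSemidef !![a, b; b, d] ↔ 0 ≤ a ∧ 0 ≤ d ∧ b ^ 2 ≤ a * d := by
  rw [Matrix.posSemidef_iff_dotProduct_mulVec]
  constructor
  · rintro ⟨-, h⟩
    have h' : ∀ x : Fin 2 → ℝ, 0 ≤ a * (x 0)^2 + 2 * b * (x 0 * x 1) + d * (x 1)^2 := by
      intro x; rw [← quad_eval]; exact h x
    have h1 : 0 ≤ a := by have := h' ![1, 0]; simpa using this
    have h2 : 0 ≤ d := by have := h' ![0, 1]; simpa using this
    refine ⟨h1, h2, ?_⟩
    rcases eq_or_lt_of_le h2 with hd0 | hd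
    · have h3 := h' ![-b / (a + 1), 1]
      simp only [Matrix.cons_val_zero, Matrix.cons_val_one, Matrix.head_cons, ← hd0] at h3
      have ha1 : (0:ℝ) < a + 1 := by linarith
      have hp : (0:ℝ) < (a+1)^2 := by positivity
      have e : a * (-b / (a + 1))^2 + 2 * b * (-b / (a + 1) * 1) + 0 * 1^2
          = -(b^2 * (a + 2)) / (a+1)^2 := by field_simp; ring
      rw [e] at h3
      have h5 := mul_nonneg h3 (le_of_lt hp)
      rw [div_mul_cancel₀ _ (ne_of_gt hp)] at h5
      have hb : b = 0 := by nlinarith [sq_nonneg b]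
      rw [hb, ← hd0]; simp
    · have h3 := h' ![1, -b / d]
      simp only [Matrix.cons_val_zero, Matrix.cons_val_one, Matrix.head_cons] at h3
      have e : a * (1:ℝ)^2 + 2 * b * (1 * (-b / d)) + d * (-b / d)^2
          = a - b^2/d := by field_simp; ring
      rw [e] at h3
      have : b^2/d ≤ a := by linarith
      calc b^2 = (b^2/d) * d := by field_simp
        _ ≤ a * d := mul_le_mul_of_nonneg_right this h2
  · rintro ⟨ha, hd, hbd⟩
    constructor
    · show (!![a, b; b, d]).conjTranspose = _
      ext i j
      fin_cases i <;> fin_cases j <;> simp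
    · intro x
      rw [quad_eval]
      rcases eq_or_lt_of_le ha with ha0 | ha0
      · have hb : b = 0 := by nlinarith [sq_nonneg b]
        rw [← ha0, hb]; simp; positivity
      · nlinarith [sq_nonneg (a * x 0 + b * x 1), mul_nonneg (sub_nonneg.2 hbd) (sq_nonneg (x 1)), mul_pos ha0 ha0]

lemma isSumSq_map {R S : Type*} [CommRing R] [CommRing S] (f : R →+* S) {a : R}
    (h : IsSumSq a) : IsSumSq (f a) := by
  induction h with
  | zero => simpa using IsSumSq.zero
  | sq_add a _ ih => rw [map_add, map_mul]; exact IsSumSq.sq_add _ ih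

lemma isSumSq_sum {R : Type*} [CommRing R] {ι : Type*} (s : Finset ι) (f : ι → R)
    (h : ∀ i ∈ s, IsSumSq (f i)) : IsSumSq (∑ i ∈ s, f i) := by
  classical
  induction s using Finset.induction with
  | empty => simpa using IsSumSq.zero
  | insert _ _ hx ih =>
    rw [Finset.sum_insert hx]
    exact IsSumSq.add (h _ (Finset.mem_insert_self _ _))
      (ih fun i hi => h i (Finset.mem_insert_of_mem hi))

lemma isSumSq_C_mul_sq {σ : Type*} (c : ℝ) (hc : 0 ≤ c) (P : MvPolynomial σ ℝ) :
    IsSumSq (C c * P ^ 2) := by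
  have : C c * P ^ 2 = (C (Real.sqrt c) * P) * (C (Real.sqrt c) * P) + 0 := by
    rw [add_zero]
    have : (C (Real.sqrt c) : MvPolynomial σ ℝ) * C (Real.sqrt c) = C c := by
      rw [← map_mul, Real.mul_self_sqrt hc]
    calc C c * P^2 = (C (Real.sqrt c) * C (Real.sqrt c)) * P^2 := by rw [this]
      _ = (C (Real.sqrt c) * P) * (C (Real.sqrt c) * P) := by ring
  rw [this]
  exact IsSumSq.sq_add _ IsSumSq.zero

/-- Sum-of-squares from a 2×2 PSD quadratic form in two polynomials. -/
lemma sos2 {σ : Type*} (a b d : ℝ) (ha : 0 ≤ a) (hd : 0 ≤ d) (hbd : b ^ 2 ≤ a * d)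
    (P Q : MvPolynomial σ ℝ) :
    IsSumSq (C a * P ^ 2 + C (2 * b) * (P * Q) + C d * Q ^ 2) := by
  rcases eq_or_lt_of_le ha with ha0 | ha0
  · have hb : b = 0 := by nlinarith [sq_nonneg b]
    have : C a * P ^ 2 + C (2 * b) * (P * Q) + C d * Q ^ 2 = C d * Q ^ 2 := by
      rw [← ha0, hb]; simp
    rw [this]
    exact isSumSq_C_mul_sq d hd Q
  · have ha' : a ≠ 0 := ne_of_gt ha0
    have key : C a * P ^ 2 + C (2 * b) * (P * Q) + C d * Q ^ 2
        = C a⁻¹ * (C a * P + C b * Q) ^ 2 + C ((a * d - b ^ 2) / a) * Q ^ 2 := by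
      have e1 : (2 : ℝ) * b = a⁻¹ * (2 * (a * b)) := by field_simp
      have e2 : d = a⁻¹ * (b * b) + (a * d - b ^ 2) / a := by field_simp; ring
      have e3 : a = a⁻¹ * (a * a) := by field_simp
      calc C a * P ^ 2 + C (2 * b) * (P * Q) + C d * Q ^ 2
          = C (a⁻¹ * (a * a)) * P ^ 2 + C (a⁻¹ * (2 * (a * b))) * (P * Q)
            + C (a⁻¹ * (b * b) + (a * d - b ^ 2) / a) * Q ^ 2 := by
            rw [← e1, ← e2, ← e3]
        _ = C a⁻¹ * (C a * P + C b * Q) ^ 2 + C ((a * d - b ^ 2) / a) * Q ^ 2 := by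
            simp only [map_add, map_mul, map_ofNat]
            ring
    rw [key]
    refine IsSumSq.add ?_ ?_
    · have h1 : (0:ℝ) ≤ a⁻¹ := by positivity
      exact isSumSq_C_mul_sq _ h1 _
    · have h2 : (0:ℝ) ≤ (a * d - b ^ 2) / a := by
        apply div_nonneg _ ha; linarith
      exact isSumSq_C_mul_sq _ h2 _

lemma sumX (n i : ℕ) (hn : (n : ℝ) ≠ 0) :
    (∑ j : Fin n, (X j : MvPolynomial (Fin n) ℝ) ^ i) = C (n : ℝ) * psum n i := by
  rw [_root_.psum, ← mul_assoc, ← map_mul, mul_inv_cancel₀ hn, map_one, one_mul]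

lemma natCast_C (n : ℕ) : ((n : MvPolynomial (Fin n) ℝ)) = C (n : ℝ) :=
  (map_natCast (C : ℝ →+* MvPolynomial (Fin n) ℝ) n).symm

lemma claim1 (n : ℕ) (hn : (n : ℝ) ≠ 0) :
    (∑ j : Fin n, (X j * psum n 1 - psum n 1 ^ 2) ^ 2)
      = C (n : ℝ) * (psum n 2 * psum n 1 ^ 2 - psum n 1 ^ 4) := by
  have e : ∀ j : Fin n, (X j * psum n 1 - psum n 1 ^ 2) ^ 2
      = (X j) ^ 2 * psum n 1 ^ 2 - (X j) ^ 1 * (2 * psum n 1 ^ 3) + psum n 1 ^ 4 := by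
    intro j; ring
  rw [Finset.sum_congr rfl fun j _ => e j]
  rw [Finset.sum_add_distrib, Finset.sum_sub_distrib, ← Finset.sum_mul, ← Finset.sum_mul,
    sumX n 2 hn, sumX n 1 hn, Finset.sum_const, Finset.card_univ, Fintype.card_fin,
    nsmul_eq_mul, natCast_C]
  ring

lemma claim2 (n : ℕ) (hn : (n : ℝ) ≠ 0) :
    (∑ j : Fin n, (X j * psum n 1 - psum n 1 ^ 2) * (X j ^ 2 - psum n 2))
      = C (n : ℝ) * (psum n 3 * psum n 1 - psum n 2 * psum n 1 ^ 2) := by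
  have e : ∀ j : Fin n, (X j * psum n 1 - psum n 1 ^ 2) * (X j ^ 2 - psum n 2)
      = (X j) ^ 3 * psum n 1 - (X j) ^ 2 * psum n 1 ^ 2
        - (X j) ^ 1 * (psum n 2 * psum n 1) + psum n 1 ^ 2 * psum n 2 := by
    intro j; ring
  rw [Finset.sum_congr rfl fun j _ => e j]
  rw [Finset.sum_add_distrib, Finset.sum_sub_distrib, Finset.sum_sub_distrib,
    ← Finset.sum_mul, ← Finset.sum_mul, ← Finset.sum_mul,
    sumX n 3 hn, sumX n 2 hn, sumX n 1 hn, Finset.sum_const, Finset.card_univ,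
    Fintype.card_fin, nsmul_eq_mul, natCast_C]
  ring

lemma claim3 (n : ℕ) (hn : (n : ℝ) ≠ 0) :
    (∑ j : Fin n, (X j ^ 2 - psum n 2) ^ 2)
      = C (n : ℝ) * (psum n 4 - psum n 2 ^ 2) := by
  have e : ∀ j : Fin n, ((X j : MvPolynomial (Fin n) ℝ) ^ 2 - psum n 2) ^ 2
      = (X j) ^ 4 - (X j) ^ 2 * (2 * psum n 2) + psum n 2 ^ 2 := by
    intro j; ring
  rw [Finset.sum_congr rfl fun j _ => e j]
  rw [Finset.sum_add_distrib, Finset.sum_sub_distrib, ← Finset.sum_mul,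
    sumX n 4 hn, sumX n 2 hn, Finset.sum_const, Finset.card_univ, Fintype.card_fin,
    nsmul_eq_mul, natCast_C]
  ring

lemma sos_of_decomp (n : ℕ) (hn : 4 ≤ n) (a11 a12 a22 b11 b12 b22 : ℝ)
    (hA1 : 0 ≤ a11) (hA2 : 0 ≤ a22) (hA3 : a12 ^ 2 ≤ a11 * a22)
    (hB1 : 0 ≤ b11) (hB2 : 0 ≤ b22) (hB3 : b12 ^ 2 ≤ b11 * b22) :
    IsSumSq (C a11 * psum n 1 ^ 4
          + C (2 * a12) * (psum n 2 * psum n 1 ^ 2)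
          + C a22 * psum n 2 ^ 2
          + C b11 * (psum n 2 * psum n 1 ^ 2 - psum n 1 ^ 4)
          + C (2 * b12) * (psum n 3 * psum n 1 - psum n 2 * psum n 1 ^ 2)
          + C b22 * (psum n 4 - psum n 2 ^ 2)) := by
  have hn0 : (n : ℝ) ≠ 0 := by
    have : 0 < n := lt_of_lt_of_le (by norm_num) hn
    exact_mod_cast Nat.pos_iff_ne_zero.mp this
  have keyB : (C b11 * (psum n 2 * psum n 1 ^ 2 - psum n 1 ^ 4)
      + C (2 * b12) * (psum n 3 * psum n 1 - psum n 2 * psum n 1 ^ 2)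
      + C b22 * (psum n 4 - psum n 2 ^ 2))
      = ∑ j : Fin n, (C (b11 / n) * (X j * psum n 1 - psum n 1 ^ 2) ^ 2
          + C (2 * (b12 / n)) * ((X j * psum n 1 - psum n 1 ^ 2) * (X j ^ 2 - psum n 2))
          + C (b22 / n) * (X j ^ 2 - psum n 2) ^ 2) := by
    rw [Finset.sum_add_distrib, Finset.sum_add_distrib,
      ← Finset.mul_sum, ← Finset.mul_sum, ← Finset.mul_sum,
      claim1 n hn0, claim2 n hn0, claim3 n hn0,
      ← mul_assoc, ← mul_assoc, ← mul_assoc, ← map_mul, ← map_mul, ← map_mul,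
      div_mul_cancel₀ _ hn0]
    have e2 : 2 * (b12 / ↑n) * ↑n = 2 * b12 := by field_simp
    have e3 : b22 / ↑n * ↑n = b22 := by field_simp
    rw [e2, e3]
  have total : (C a11 * psum n 1 ^ 4
          + C (2 * a12) * (psum n 2 * psum n 1 ^ 2)
          + C a22 * psum n 2 ^ 2
          + C b11 * (psum n 2 * psum n 1 ^ 2 - psum n 1 ^ 4)
          + C (2 * b12) * (psum n 3 * psum n 1 - psum n 2 * psum n 1 ^ 2)
          + C b22 * (psum n 4 - psum n 2 ^ 2))
      = (C a11 * (psum n 1 ^ 2) ^ 2 + C (2 * a12) * ((psum n 1 ^ 2) * psum n 2)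
          + C a22 * (psum n 2) ^ 2)
        + (∑ j : Fin n, (C (b11 / n) * (X j * psum n 1 - psum n 1 ^ 2) ^ 2
          + C (2 * (b12 / n)) * ((X j * psum n 1 - psum n 1 ^ 2) * (X j ^ 2 - psum n 2))
          + C (b22 / n) * (X j ^ 2 - psum n 2) ^ 2)) := by
    rw [← keyB]; ring
  rw [total]
  have hnpos : (0:ℝ) < (n:ℝ) := by
    have : 0 < n := lt_of_lt_of_le (by norm_num) hn
    exact_mod_cast this
  refine IsSumSq.add (sos2 a11 a12 a22 hA1 hA2 hA3 _ _) ?_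
  refine isSumSq_sum _ _ fun j _ => ?_
  refine sos2 (b11 / n) (b12 / n) (b22 / n) (by positivity) (by positivity) ?_ _ _
  rw [div_pow, div_mul_div_comm, ← sq]
  exact div_le_div_of_nonneg_right hB3 (by positivity) 

lemma eval_nonneg_of_isSumSq {n : ℕ} {p : MvPolynomial (Fin n) ℝ} (h : IsSumSq p)
    (x : Fin n → ℝ) : 0 ≤ eval x p :=
  (isSumSq_map (eval x) h).nonneg

/-- The moment function for a two-atom distribution. -/
noncomputable def mom (w a b : ℝ) (i : ℕ) : ℝ := w * a ^ i + (1 - w) * b ^ i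

/-- Value of the quartic form on moments. -/
noncomputable def Fm (c4 c31 c22 c211 c1111 w a b : ℝ) : ℝ :=
  c4 * mom w a b 4 + c31 * (mom w a b 3 * mom w a b 1) + c22 * (mom w a b 2) ^ 2
    + c211 * (mom w a b 2 * (mom w a b 1) ^ 2) + c1111 * (mom w a b 1) ^ 4

lemma eval_psum (n i k : ℕ) (hn : (n:ℝ) ≠ 0) (hk : k ≤ n) (a b : ℝ) :
    eval (fun j : Fin n => if (j : ℕ) < k then a else b) (psum n i)
      = mom ((k : ℝ)/(n : ℝ)) a b i := by
  rw [_root_.psum, map_mul, eval_C, map_sum]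
  have e1 : ∀ j : Fin n, eval (fun j : Fin n => if (j : ℕ) < k then a else b) (X j ^ i)
      = (if (j : ℕ) < k then a else b) ^ i := by
    intro j; rw [map_pow, eval_X]
  rw [Finset.sum_congr rfl fun j _ => e1 j]
  rw [Fin.sum_univ_eq_sum_range (fun m => (if m < k then a else b) ^ i) n]
  rw [← Finset.sum_range_add_sum_Ico _ hk]
  have e2 : ∀ m ∈ Finset.range k, (if m < k then a else b) ^ i = a ^ i := by
    intro m hm; rw [if_pos (Finset.mem_range.mp hm)]
  have e3 : ∀ m ∈ Finset.Ico k n, (if m < k then a else b) ^ i = b ^ i := by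
    intro m hm; rw [if_neg (not_lt.mpr (Finset.mem_Ico.mp hm).1)]
  rw [Finset.sum_congr rfl e2, Finset.sum_congr rfl e3, Finset.sum_const, Finset.sum_const]
  rw [Nat.card_Ico, Finset.card_range, nsmul_eq_mul, nsmul_eq_mul, mom]
  have : ((n - k : ℕ) : ℝ) = (n : ℝ) - (k : ℝ) := Nat.cast_sub hk
  rw [this]
  field_simp

lemma eval_quartic (n k : ℕ) (hn : (n:ℝ) ≠ 0) (hk : k ≤ n) (a b c4 c31 c22 c211 c1111 : ℝ) :
    eval (fun j : Fin n => if (j : ℕ) < k then a else b) (quarticForm n c4 c31 c22 c211 c1111)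
      = Fm c4 c31 c22 c211 c1111 ((k:ℝ)/(n:ℝ)) a b := by
  rw [quarticForm, Fm]
  simp only [map_add, map_mul, map_pow, eval_C]
  rw [eval_psum n 4 k hn hk, eval_psum n 3 k hn hk, eval_psum n 2 k hn hk,
    eval_psum n 1 k hn hk]

/-- Floor sequence tends to w. -/
lemma floor_div_tendsto (w : ℝ) (hw0 : 0 ≤ w) :
    Filter.Tendsto (fun n : ℕ => (⌊w * n⌋₊ : ℝ) / n) Filter.atTop (nhds w) := by
  have key : Filter.Tendsto (fun n : ℕ => (⌊w * n⌋₊ : ℝ) / n - w) Filter.atTop (nhds 0) := by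
    apply squeeze_zero_norm' (a := fun n : ℕ => 1 / (n : ℝ))
    · filter_upwards [Filter.eventually_ge_atTop 1] with n hn
      have hn' : (0:ℝ) < n := by exact_mod_cast hn
      have hfl : w * n - 1 < (⌊w * n⌋₊ : ℝ) := Nat.sub_one_lt_floor (w * n)
      have up : (⌊w * n⌋₊ : ℝ) / n ≤ w := by
        rw [div_le_iff₀ hn']; exact Nat.floor_le (by positivity)
      have lo : w - 1 / n ≤ (⌊w * n⌋₊ : ℝ) / n := by
        have e' : (w - 1/(n:ℝ)) * n = w * n - 1 := by field_simp
        rw [le_div_iff₀ hn', e']; linarith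
      have h1n : (0:ℝ) ≤ 1 / n := by positivity
      rw [Real.norm_eq_abs, abs_le]
      constructor <;> linarith
    · exact tendsto_one_div_atTop_nhds_zero_nat
  have := key.add_const w
  simpa using this

/-- Nonnegativity on the open positive orthant for a binary quadratic implies
the lower bound on the middle coefficient. -/
lemma orthant_quad {A B Cc : ℝ} (hA : 0 ≤ A) (hC : 0 ≤ Cc)
    (h : ∀ q V : ℝ, 0 ≤ q → 0 < V → 0 ≤ A * q ^ 2 + B * (q * V) + Cc * V ^ 2) :
    -(2 * Real.sqrt (A * Cc)) ≤ B := by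
  rcases le_or_gt 0 B with hB | hB
  · have : 0 ≤ Real.sqrt (A * Cc) := Real.sqrt_nonneg _
    linarith
  · rcases eq_or_lt_of_le hC with hC0 | hC0
    · exfalso
      have hV : (0:ℝ) < (A + 1) / (-B) := div_pos (by linarith) (by linarith)
      have hx := h 1 ((A + 1) / (-B)) (by norm_num) hV
      rw [← hC0] at hx
      have hBne : -B ≠ 0 := by intro hc; rw [neg_eq_zero] at hc; exact (ne_of_lt hB) hc
      have e : A * 1 ^ 2 + B * (1 * ((A + 1) / (-B))) + 0 * ((A + 1) / (-B)) ^ 2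
          = -1 := by have hB0 : B ≠ 0 := ne_of_lt hB; field_simp; ring
      rw [e] at hx; linarith
    · have h1 := h (2 * Cc) (-B) (by positivity) (by linarith)
      have hB2 : B ^ 2 ≤ 4 * A * Cc := by nlinarith
      have h3 : (-B) ^ 2 ≤ (2 * Real.sqrt (A * Cc)) ^ 2 := by
        rw [mul_pow, Real.sq_sqrt (by positivity)]
        nlinarith
      have h5 : -B ≤ 2 * Real.sqrt (A * Cc) := by
        have h4 := Real.sqrt_le_sqrt h3
        rwa [Real.sqrt_sq (by linarith), Real.sqrt_sq (by positivity)] at h4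
      linarith

/-- Homogenization: nonnegativity of a quadratic on `[0,1]` gives orthant
nonnegativity of the homogenized form. -/
lemma homog_quad {a b c : ℝ} (hg : ∀ s : ℝ, 0 ≤ s → s ≤ 1 → 0 ≤ a * s ^ 2 + b * s + c) :
    ∀ q V : ℝ, 0 ≤ q → 0 < V →
      0 ≤ (a + b + c) * q ^ 2 + (b + 2 * c) * (q * V) + c * V ^ 2 := by
  intro q V hq hV
  have hqV : (0:ℝ) < q + V := by linarith
  set s := q / (q + V) with hs
  have hs0 : 0 ≤ s := by positivity
  have hs1 : s ≤ 1 := by rw [hs, div_le_one hqV]; linarith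
  have key : (a + b + c) * q ^ 2 + (b + 2 * c) * (q * V) + c * V ^ 2
      = (q + V) ^ 2 * (a * s ^ 2 + b * s + c) := by
    rw [hs]; field_simp; ring
  rw [key]
  exact mul_nonneg (by positivity) (hg s hs0 hs1)

section
variable (c4 c31 c22 c211 c1111 : ℝ)

lemma key_ineq
    (Hw : ∀ w a b : ℝ, 0 ≤ w → w ≤ 1 → 0 ≤ Fm c4 c31 c22 c211 c1111 w a b)
    (m1 V μ : ℝ) (hV : 0 < V) :
    0 ≤ (c1111 + c211 + c22 + c31 + c4) * m1 ^ 4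
      + ((c211 + c31) + 2 * (c22 + c4)) * (m1 ^ 2 * V) + (c22 + c4) * V ^ 2
      + c31 * (m1 * (V * (2 * m1 + μ))) + c4 * (V * (2 * m1 + μ) ^ 2) := by
  set m := μ ^ 2 / V with hm_def
  have hm : 0 ≤ m := by positivity
  have hm4 : (0:ℝ) < m + 4 := by linarith
  set r := Real.sqrt (m / (m + 4)) with hr_def
  have hr0 : 0 ≤ r := Real.sqrt_nonneg _
  have hr2 : r ^ 2 = m / (m + 4) := Real.sq_sqrt (by positivity)
  have hmlt : m / (m + 4) < 1 := by rw [div_lt_one hm4]; linarith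
  have hrlt : r < 1 := by nlinarith
  set σ : ℝ := if 0 ≤ μ then 1 else -1 with hσ_def
  have hσ2 : σ ^ 2 = 1 := by rw [hσ_def]; split <;> norm_num
  have hσabs : σ * |μ| = μ := by
    rw [hσ_def]; split
    · rw [abs_of_nonneg (by assumption)]; ring
    · rw [abs_of_neg (by linarith [lt_of_not_ge (by assumption)])]; ring
  have hσr : σ * r ≤ r ∧ -r ≤ σ * r := by
    rw [hσ_def]; split <;> constructor <;> nlinarith
  set w := (1 - σ * r) / 2 with hw_def
  have hw0 : 0 ≤ w := by rw [hw_def]; nlinarith [hσr.1]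
  have hw1 : w ≤ 1 := by rw [hw_def]; nlinarith [hσr.2]
  set D := Real.sqrt ((m + 4) * V) with hD_def
  have hD2 : D ^ 2 = (m + 4) * V := Real.sq_sqrt (by positivity)
  have hV' : w * (1 - w) * D ^ 2 = V := by
    have e1 : w * (1 - w) = (1 - σ ^ 2 * r ^ 2) / 4 := by rw [hw_def]; ring
    rw [e1, hσ2, hr2, hD2]
    field_simp
    ring
  have hμ' : (1 - 2 * w) * D = μ := by
    have e1 : 1 - 2 * w = σ * r := by rw [hw_def]; ring
    have e2 : r * D = |μ| := by
      rw [hr_def, hD_def, ← Real.sqrt_mul (by positivity)]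
      have e3 : m / (m + 4) * ((m + 4) * V) = μ ^ 2 := by
        rw [hm_def]; field_simp
      rw [e3, Real.sqrt_sq_eq_abs]
    rw [e1, mul_assoc, e2, hσabs]
  have h := Hw w (m1 + (1 - w) * D) (m1 - w * D) hw0 hw1
  have master : Fm c4 c31 c22 c211 c1111 w (m1 + (1 - w) * D) (m1 - w * D)
      = (c1111 + c211 + c22 + c31 + c4) * m1 ^ 4
        + ((c211 + c31) + 2 * (c22 + c4)) * (m1 ^ 2 * (w * (1 - w) * D ^ 2))
        + (c22 + c4) * (w * (1 - w) * D ^ 2) ^ 2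
        + c31 * (m1 * ((w * (1 - w) * D ^ 2) * (2 * m1 + (1 - 2 * w) * D)))
        + c4 * ((w * (1 - w) * D ^ 2) * (2 * m1 + (1 - 2 * w) * D) ^ 2) := by
    simp only [Fm, mom]
    ring
  rw [master, hV', hμ'] at h
  exact h

end
lemma Hw_of_sos (c4 c31 c22 c211 c1111 : ℝ)
    (H : ∀ n : ℕ, 4 ≤ n → IsSumSq (quarticForm n c4 c31 c22 c211 c1111)) :
    ∀ w a b : ℝ, 0 ≤ w → w ≤ 1 → 0 ≤ Fm c4 c31 c22 c211 c1111 w a b := by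
  intro w a b hw0 hw1
  have Hq : ∀ n k : ℕ, 4 ≤ n → k ≤ n →
      0 ≤ Fm c4 c31 c22 c211 c1111 ((k : ℝ) / (n : ℝ)) a b := by
    intro n k hn hk
    have hn0 : (n : ℝ) ≠ 0 := by
      have : 0 < n := lt_of_lt_of_le (by norm_num) hn
      exact_mod_cast this.ne'
    rw [← eval_quartic n k hn0 hk a b]
    exact eval_nonneg_of_isSumSq (H n hn) _
  have hcont : Continuous fun s : ℝ => Fm c4 c31 c22 c211 c1111 s a b := by
    simp only [Fm, mom]
    fun_prop
  have htend := (hcont.tendsto w).comp (floor_div_tendsto w hw0)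
  apply ge_of_tendsto htend
  filter_upwards [Filter.eventually_ge_atTop 4] with n hn
  have hk : ⌊w * n⌋₊ ≤ n := by
    have h1 : w * n ≤ (n : ℝ) := by
      nlinarith [(Nat.cast_nonneg n : (0:ℝ) ≤ (n:ℝ))]
    calc ⌊w * n⌋₊ ≤ ⌊(n : ℝ)⌋₊ := Nat.floor_le_floor h1
      _ = n := Nat.floor_natCast n
  exact Hq n ⌊w * n⌋₊ hn hk

lemma forward_exists (c4 c31 c22 c211 c1111 : ℝ)
    (Hw : ∀ w a b : ℝ, 0 ≤ w → w ≤ 1 → 0 ≤ Fm c4 c31 c22 c211 c1111 w a b) :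
    ∃ t : ℝ, 0 ≤ t ∧ 0 ≤ c1111 + t
      ∧ ((c211 + c31 - t) / 2) ^ 2 ≤ (c1111 + t) * (c22 + c4)
      ∧ (c31 / 2) ^ 2 ≤ t * c4 ∧ 0 ≤ c4 ∧ 0 ≤ c22 + c4 := by
  have KEY := key_ineq c4 c31 c22 c211 c1111 Hw
  have hδ : 0 ≤ c22 + c4 := by
    have h := KEY 0 1 0 one_pos
    norm_num at h
    linarith
  have hc4 : 0 ≤ c4 := by
    by_contra hneg
    push_neg at hneg
    have hc4ne : c4 ≠ 0 := ne_of_lt hneg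
    set A := |c22 + c4| + 1 with hA_def
    have hApos : 0 ≤ A := by rw [hA_def]; positivity
    have hAnn : 0 ≤ A / -c4 := div_nonneg hApos (by linarith)
    set μ0 := Real.sqrt (A / -c4) with hμ0_def
    have hμ0 : c4 * μ0 ^ 2 = -A := by
      rw [hμ0_def, Real.sq_sqrt hAnn]
      rw [div_neg, mul_neg, ← mul_div_assoc, mul_comm c4 A, mul_div_assoc,
        div_self hc4ne, mul_one]
    have h := KEY 0 1 μ0 one_pos
    norm_num at h
    have hle : c22 + c4 ≤ |c22 + c4| := le_abs_self _
    nlinarith [h, hμ0, hle, hA_def]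
  have hg1 : 0 ≤ c1111 + (c211 + c31) + (c22 + c4) := by
    have h := Hw 1 1 0 zero_le_one le_rfl
    simp only [Fm, mom] at h
    norm_num at h
    linarith
  -- the univariate quadratic is nonnegative on [0,1]
  have G1 : ∀ s : ℝ, 0 ≤ s → s ≤ 1 →
      0 ≤ c1111 * s ^ 2 + (c211 + c31) * s + (c22 + c4) := by
    intro s hs0 hs1
    set r := Real.sqrt s with hr_def
    have hr0 : 0 ≤ r := Real.sqrt_nonneg _
    have hr2 : r ^ 2 = s := Real.sq_sqrt hs0
    have hr1 : r ≤ 1 := by nlinarith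
    have h := Hw ((1 + r) / 2) 1 (-1) (by linarith) (by linarith)
    have e : Fm c4 c31 c22 c211 c1111 ((1 + r) / 2) 1 (-1)
        = c1111 * (r ^ 2) ^ 2 + (c211 + c31) * r ^ 2 + (c22 + c4) := by
      simp only [Fm, mom]
      ring
    rw [e, hr2] at h
    exact h
  have horth := homog_quad G1
  set s := Real.sqrt ((c1111 + (c211 + c31) + (c22 + c4)) * (c22 + c4)) with hs_def
  have hs0 : 0 ≤ s := Real.sqrt_nonneg _
  have hs2 : s ^ 2 = (c1111 + (c211 + c31) + (c22 + c4)) * (c22 + c4) :=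
    Real.sq_sqrt (mul_nonneg hg1 hδ)
  have hsprod : s = Real.sqrt (c1111 + (c211 + c31) + (c22 + c4)) * Real.sqrt (c22 + c4) :=
    Real.sqrt_mul hg1 _
  have C5 : -(2 * s) ≤ (c211 + c31) + 2 * (c22 + c4) := by
    rw [hs_def]
    exact orthant_quad hg1 hδ horth
  -- the division-robust bound on c31²/(4 c4)
  have hT2 : c31 ^ 2 / (4 * c4) ≤ (c211 + c31) + 2 * (c22 + c4) + 2 * s := by
    rcases eq_or_lt_of_le hc4 with hc40 | hc40
    · -- c4 = 0 : then c31 = 0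
      have hc31 : c31 = 0 := by
        by_contra hne
        have h := KEY 1 1 (-2 - ((c1111 + (c211 + c31) + (c22 + c4))
          + ((c211 + c31) + 2 * (c22 + c4)) + (c22 + c4) + 1) / c31) one_pos
        rw [← hc40] at h
        have e : (c1111 + c211 + c22 + c31 + c4) * (1:ℝ) ^ 4
            + ((c211 + c31) + 2 * (c22 + c4)) * ((1:ℝ) ^ 2 * 1) + (c22 + c4) * (1:ℝ) ^ 2
            + c31 * (1 * (1 * (2 * 1 + (-2 - ((c1111 + (c211 + c31) + (c22 + c4))
              + ((c211 + c31) + 2 * (c22 + c4)) + (c22 + c4) + 1) / c31))))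
            + 0 * (1 * (2 * 1 + (-2 - ((c1111 + (c211 + c31) + (c22 + c4))
              + ((c211 + c31) + 2 * (c22 + c4)) + (c22 + c4) + 1) / c31)) ^ 2)
            = -1 := by
          field_simp
          ring
        rw [← hc40] at e
        rw [e] at h
        linarith
      rw [hc31, ← hc40]
      norm_num
      linarith
    · -- c4 > 0
      have hq' : ∀ q V : ℝ, 0 ≤ q → 0 < V →
          0 ≤ (c1111 + (c211 + c31) + (c22 + c4)) * q ^ 2
            + ((c211 + c31) + 2 * (c22 + c4) - c31 ^ 2 / (4 * c4)) * (q * V)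
            + (c22 + c4) * V ^ 2 := by
        intro q V hq hV
        set m1 := Real.sqrt q with hm1_def
        have hm2 : m1 ^ 2 = q := Real.sq_sqrt hq
        have h := KEY m1 V (-2 * m1 - c31 * m1 / (2 * c4)) hV
        have e : (c1111 + c211 + c22 + c31 + c4) * m1 ^ 4
            + ((c211 + c31) + 2 * (c22 + c4)) * (m1 ^ 2 * V) + (c22 + c4) * V ^ 2
            + c31 * (m1 * (V * (2 * m1 + (-2 * m1 - c31 * m1 / (2 * c4)))))
            + c4 * (V * (2 * m1 + (-2 * m1 - c31 * m1 / (2 * c4))) ^ 2)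
            = (c1111 + (c211 + c31) + (c22 + c4)) * (m1 ^ 2) ^ 2
            + ((c211 + c31) + 2 * (c22 + c4) - c31 ^ 2 / (4 * c4)) * ((m1 ^ 2) * V)
            + (c22 + c4) * V ^ 2 := by
          field_simp
          ring
        rw [e, hm2] at h
        exact h
      have := orthant_quad hg1 hδ hq'
      rw [← hs_def] at this
      linarith
  have hC5' : 0 ≤ (c211 + c31) + 2 * (c22 + c4) + 2 * s := by linarith
  refine ⟨max ((c211 + c31) + 2 * (c22 + c4) - 2 * s) (max 0 (c31 ^ 2 / (4 * c4))),
    ?_, ?_, ?_, ?_, hc4, hδ⟩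
  · exact le_max_of_le_right (le_max_left _ _)
  · have h1 : (c211 + c31) + 2 * (c22 + c4) - 2 * s
        ≤ max ((c211 + c31) + 2 * (c22 + c4) - 2 * s) (max 0 (c31 ^ 2 / (4 * c4))) :=
      le_max_left _ _
    nlinarith [sq_nonneg (Real.sqrt (c1111 + (c211 + c31) + (c22 + c4)) - Real.sqrt (c22 + c4)),
      Real.sq_sqrt hg1, Real.sq_sqrt hδ]
  · have h1 : (c211 + c31) + 2 * (c22 + c4) - 2 * s
        ≤ max ((c211 + c31) + 2 * (c22 + c4) - 2 * s) (max 0 (c31 ^ 2 / (4 * c4))) :=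
      le_max_left _ _
    have h2 : max ((c211 + c31) + 2 * (c22 + c4) - 2 * s) (max 0 (c31 ^ 2 / (4 * c4)))
        ≤ (c211 + c31) + 2 * (c22 + c4) + 2 * s := by
      apply max_le (by linarith)
      exact max_le hC5' hT2
    nlinarith [mul_nonneg (sub_nonneg.2 h1) (sub_nonneg.2 h2), hs2]
  · have ht : c31 ^ 2 / (4 * c4)
        ≤ max ((c211 + c31) + 2 * (c22 + c4) - 2 * s) (max 0 (c31 ^ 2 / (4 * c4))) :=
      le_max_of_le_right (le_max_right _ _)
    rcases eq_or_lt_of_le hc4 with hc40 | hc40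
    · have hc31 : c31 ^ 2 / (4 * c4) = 0 := by rw [← hc40]; norm_num
      -- need (c31/2)^2 ≤ t * 0 = 0, i.e. c31 = 0
      have hc31z : c31 = 0 := by
        by_contra hne
        have h := KEY 1 1 (-2 - ((c1111 + (c211 + c31) + (c22 + c4))
          + ((c211 + c31) + 2 * (c22 + c4)) + (c22 + c4) + 1) / c31) one_pos
        rw [← hc40] at h
        have e : (c1111 + c211 + c22 + c31 + 0) * (1:ℝ) ^ 4
            + ((c211 + c31) + 2 * (c22 + 0)) * ((1:ℝ) ^ 2 * 1) + (c22 + 0) * (1:ℝ) ^ 2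
            + c31 * (1 * (1 * (2 * 1 + (-2 - ((c1111 + (c211 + c31) + (c22 + 0))
              + ((c211 + c31) + 2 * (c22 + 0)) + (c22 + 0) + 1) / c31))))
            + 0 * (1 * (2 * 1 + (-2 - ((c1111 + (c211 + c31) + (c22 + 0))
              + ((c211 + c31) + 2 * (c22 + 0)) + (c22 + 0) + 1) / c31)) ^ 2)
            = -1 := by
          field_simp
          ring
        rw [e] at h
        linarith
      rw [hc31z, ← hc40]
      norm_num
    · have h4c4 : (0:ℝ) < 4 * c4 := by linarith
      have := mul_le_mul_of_nonneg_right ht (le_of_lt hc40)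
      calc (c31 / 2) ^ 2 = c31 ^ 2 / (4 * c4) * c4 := by field_simp; ring
        _ ≤ _ := this

/-- A symmetric quartic `f^{(n)}` is a sum of squares for every `n ≥ 4` iff its
coefficient vector admits a decomposition by two positive semidefinite `2×2`
matrices, uniformly in `n`. -/
theorem mem_S4_iff_decomposition (c4 c31 c22 c211 c1111 : ℝ) :
    (∀ n : ℕ, 4 ≤ n → IsSumSq (quarticForm n c4 c31 c22 c211 c1111)) ↔
    ∃ a11 a12 a22 b11 b12 b22 : ℝ,
      Matrix.PosSemidef !![a11, a12; a12, a22] ∧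
      Matrix.PosSemidef !![b11, b12; b12, b22] ∧
      ∀ n : ℕ, 4 ≤ n →
        quarticForm n c4 c31 c22 c211 c1111 =
          C a11 * psum n 1 ^ 4
          + C (2 * a12) * (psum n 2 * psum n 1 ^ 2)
          + C a22 * psum n 2 ^ 2
          + C b11 * (psum n 2 * psum n 1 ^ 2 - psum n 1 ^ 4)
          + C (2 * b12) * (psum n 3 * psum n 1 - psum n 2 * psum n 1 ^ 2)
          + C b22 * (psum n 4 - psum n 2 ^ 2) := by
  constructor
  · intro H
    have Hw := Hw_of_sos c4 c31 c22 c211 c1111 H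
    obtain ⟨t, ht0, h11, hquad, hB, hc4, hδ⟩ := forward_exists c4 c31 c22 c211 c1111 Hw
    refine ⟨c1111 + t, (c211 + c31 - t) / 2, c22 + c4, t, c31 / 2, c4, ?_, ?_, ?_⟩
    · rw [psd2_iff]; exact ⟨h11, hδ, hquad⟩
    · rw [psd2_iff]; exact ⟨ht0, hc4, hB⟩
    · intro n hn
      have e1 : (2:ℝ) * ((c211 + c31 - t) / 2) = c211 + c31 - t := by ring
      have e2 : (2:ℝ) * (c31 / 2) = c31 := by ring
      rw [quarticForm, e1, e2]
      simp only [map_add, map_sub]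
      ring
  · rintro ⟨a11, a12, a22, b11, b12, b22, hA, hB, hid⟩ n hn
    rw [psd2_iff] at hA hB
    rw [hid n hn]
    exact sos_of_decomp n hn a11 a12 a22 b11 b12 b22 hA.1 hA.2.1 hA.2.2 hB.1 hB.2.1 hB.2.2
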